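/- arXiv:2310.07108 — 3 statements merged into one kernel-verified Lean document; each statement's English description precedes it below -/
import Mathlib

section
/- Let F be a finite-dimensional real inner product space and A : F →ₗ[ℝ] F a self-adjoint, positive semidefinite linear map (⟪A x, y⟫ = ⟪x, A y⟫ for all x, y, and ⟪x, A x⟫ ≥ 0 for all x). Let K := ker A, let W be a subspace of F, let P_K and P_W denote the orthogonal projections onto K and W, and set C := ‖P_K ∘ (id − P_W)‖ (operator norm). Suppose λ₁ > 0 satisfies ⟪w, A w⟫ ≥ λ₁ ‖w‖² for all w in the orthogonal complement Kᗮ of K (λ₁ is the smallest positive eigenvalue of A). Then every unit vector v orthogonal to W satisfies ⟪v, A v⟫ ≥ (1 − C²) λ₁. -/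
open scoped RealInnerProductSpace

theorem stmt_2 {F : Type*} [NormedAddCommGroup F] [InnerProductSpace ℝ F]
    [FiniteDimensional ℝ F]
    (A : F →ₗ[ℝ] F)
    (hsa : ∀ x y : F, ⟪A x, y⟫ = ⟪x, A y⟫)
    (hpsd : ∀ x : F, 0 ≤ ⟪x, A x⟫)
    (W : Submodule ℝ F) (C : ℝ)
    (hC : C = ‖(((LinearMap.ker A).subtypeL.comp
        (LinearMap.ker A).orthogonalProjectionOnto).comp
        (ContinuousLinearMap.id ℝ F - W.subtypeL.comp W.orthogonalProjectionOnto))‖)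
    (lam : ℝ) (hlam : 0 < lam)
    (hmin : ∀ w ∈ (LinearMap.ker A)ᗮ, lam * ‖w‖ ^ 2 ≤ ⟪w, A w⟫)
    (v : F) (hv : ‖v‖ = 1) (hvW : v ∈ Wᗮ) :
    (1 - C ^ 2) * lam ≤ ⟪v, A v⟫ := by
  set K := LinearMap.ker A with hK
  set T := ((K.subtypeL.comp K.orthogonalProjectionOnto).comp
      (ContinuousLinearMap.id ℝ F - W.subtypeL.comp W.orthogonalProjectionOnto)) with hT
  set vK : F := (K.orthogonalProjectionOnto v : F) with hvK
  have hvKmem : vK ∈ K := (K.orthogonalProjectionOnto v).2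
  set w : F := v - vK with hw
  have hwmem : w ∈ Kᗮ := K.sub_starProjection_mem_orthogonal v
  have hAvK : A vK = 0 := hvKmem
  have hAv : A v = A w := by
    rw [hw, map_sub, hAvK, sub_zero]
  have hinner0 : ⟪vK, w⟫ = 0 := hwmem vK hvKmem
  have hvsum : v = vK + w := by rw [hw]; abel
  have hpyth : ‖vK‖ ^ 2 + ‖w‖ ^ 2 = 1 := by
    have := norm_add_sq_real vK w
    rw [← hvsum, hv, hinner0] at this
    nlinarith
  have hPW : W.orthogonalProjectionOnto v = 0 :=
    Submodule.orthogonalProjectionOnto_apply_of_mem_orthogonal hvW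
  have hTv : T v = vK := by
    simp [hT, hvK, hPW]
  have hCge : ‖vK‖ ≤ C := by
    rw [hC]
    calc ‖vK‖ = ‖T v‖ := by rw [hTv]
    _ ≤ ‖T‖ * ‖v‖ := T.le_opNorm v
    _ = ‖T‖ := by rw [hv, mul_one]
  have hCnn : (0:ℝ) ≤ C := le_trans (norm_nonneg vK) hCge
  have h1 : ⟪v, A v⟫ = ⟪w, A w⟫ := by
    rw [hAv, hvsum, inner_add_left]
    have : ⟪vK, A w⟫ = 0 := by rw [← hsa, hAvK, inner_zero_left]
    rw [this, zero_add]
  have h2 : lam * ‖w‖ ^ 2 ≤ ⟪w, A w⟫ := hmin w hwmem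
  have hC2 : ‖vK‖ ^ 2 ≤ C ^ 2 := by nlinarith [norm_nonneg vK]
  nlinarith [mul_le_mul_of_nonneg_left hC2 hlam.le]
end

section
/- Let F be a finite-dimensional real inner product space, E : F → ℝ twice continuously differentiable, and n a natural number. For each j : Fin n, let A_j : ℝ → (F →L[ℝ] F) satisfy: A_j 0 = id, each A_j t is bijective, t ↦ A_j t U is differentiable at 0, t ↦ fderiv ℝ E (A_j t U) is differentiable at 0, and E (A_j t x) = E x for all t and x. Suppose fderiv ℝ E U = 0 and set w_j := deriv (fun t => A_j t U) 0. Then the linear span of {w_j : j ∈ Fin n} is contained in the kernel of the Hessian map H := fderiv ℝ (fun x => fderiv ℝ E x) U : F →L[ℝ] (F →L[ℝ] ℝ); in particular, the dimension of the kernel of H (as a linear map) is at least the dimension of the span of {w_j : j ∈ Fin n}. -/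
theorem stmt_8 {F : Type*} [NormedAddCommGroup F] [InnerProductSpace ℝ F]
    [FiniteDimensional ℝ F]
    (E : F → ℝ) (hE : ContDiff ℝ 2 E) (n : ℕ)
    (A : Fin n → ℝ → (F →L[ℝ] F)) (U : F)
    (hA0 : ∀ j, A j 0 = ContinuousLinearMap.id ℝ F)
    (hbij : ∀ j (t : ℝ), Function.Bijective (A j t))
    (hdiff : ∀ j, DifferentiableAt ℝ (fun t : ℝ => A j t U) 0)
    (hdiff2 : ∀ j, DifferentiableAt ℝ (fun t : ℝ => fderiv ℝ E (A j t U)) 0)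
    (hinv : ∀ j (t : ℝ) (x : F), E (A j t x) = E x)
    (hcrit : fderiv ℝ E U = 0) :
    Submodule.span ℝ (Set.range fun j => deriv (fun t : ℝ => A j t U) 0) ≤
        LinearMap.ker ((fderiv ℝ (fun x => fderiv ℝ E x) U : F →L[ℝ] F →L[ℝ] ℝ) : F →ₗ[ℝ] F →L[ℝ] ℝ) ∧
      Module.finrank ℝ
          (Submodule.span ℝ (Set.range fun j => deriv (fun t : ℝ => A j t U) 0)) ≤
        Module.finrank ℝ (LinearMap.ker ((fderiv ℝ (fun x => fderiv ℝ E x) U : F →L[ℝ] F →L[ℝ] ℝ) : F →ₗ[ℝ] F →L[ℝ] ℝ)) := by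
  have hEd : Differentiable ℝ E := hE.differentiable (by norm_num)
  have hg : DifferentiableAt ℝ (fun x => fderiv ℝ E x) U :=
    ((hE.fderiv_right (m := 1) (by norm_num)).differentiable (by norm_num)) U
  have hzero : ∀ j (t : ℝ), fderiv ℝ E (A j t U) = 0 := by
    intro j t
    have hcomp : fderiv ℝ (E ∘ (A j t)) U = (fderiv ℝ E (A j t U)).comp (A j t) := by
      rw [fderiv_comp U (hEd _) (A j t).differentiableAt, (A j t).fderiv]
    have heq : (E ∘ (A j t)) = E := funext fun x => hinv j t x
    rw [heq, hcrit] at hcomp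
    ext y
    obtain ⟨x, hx⟩ := (hbij j t).2 y
    have h := congrArg (fun L : F →L[ℝ] ℝ => L x) hcomp
    simpa [hx] using h.symm
  have hker : ∀ j, deriv (fun t : ℝ => A j t U) 0 ∈
      LinearMap.ker ((fderiv ℝ (fun x => fderiv ℝ E x) U : F →L[ℝ] F →L[ℝ] ℝ) : F →ₗ[ℝ] F →L[ℝ] ℝ) := by
    intro j
    set c := fun t : ℝ => A j t U with hc
    have hcU : c 0 = U := by simp [hc, hA0 j]
    have hgc : DifferentiableAt ℝ (fun x => fderiv ℝ E x) (c 0) := hcU ▸ hg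
    have h1 : fderiv ℝ ((fun x => fderiv ℝ E x) ∘ c) 0 =
        (fderiv ℝ (fun x => fderiv ℝ E x) (c 0)).comp (fderiv ℝ c 0) :=
      fderiv_comp 0 hgc (hdiff j)
    have h2 : ((fun x => fderiv ℝ E x) ∘ c) = fun _ : ℝ => (0 : F →L[ℝ] ℝ) :=
      funext fun t => hzero j t
    rw [h2, fderiv_fun_const] at h1
    have h3 := congrArg (fun L : ℝ →L[ℝ] (F →L[ℝ] ℝ) => L 1) h1.symm
    simp at h3
    rw [LinearMap.mem_ker]
    have hderiv : deriv c 0 = fderiv ℝ c 0 1 := rfl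
    rw [hderiv, ← hcU]
    exact h3
  constructor
  · rw [Submodule.span_le]
    rintro x ⟨j, rfl⟩
    exact hker j
  · apply Submodule.finrank_mono
    rw [Submodule.span_le]
    rintro x ⟨j, rfl⟩
    exact hker j
end

section
/- Let n be a natural number, S a finite set of integer vectors (a Finset of Fin n → ℤ), and c : (Fin n → ℤ) → ℂ a function with c k ≠ 0 for every k ∈ S. Define the real-linear map T : (Fin n → ℝ) →ₗ[ℝ] (S → ℂ) by (T α) k = ((∑ i, α i * ((k : Fin n → ℤ) i : ℝ)) : ℝ) • c k. Then the rank of T equals the dimension of the real span of the image of S in Fin n → ℝ under coordinatewise coercion, i.e. finrank ℝ (range T) = finrank ℝ (Submodule.span ℝ {(fun i => ((k i : ℝ))) | k ∈ S}). -/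
open Module

theorem stmt_10 (n : ℕ) (S : Finset (Fin n → ℤ)) (c : (Fin n → ℤ) → ℂ)
    (hc : ∀ k ∈ S, c k ≠ 0)
    (T : (Fin n → ℝ) →ₗ[ℝ] (S → ℂ))
    (hT : ∀ (α : Fin n → ℝ) (k : S),
      T α k = (∑ i, α i * ((k : Fin n → ℤ) i : ℝ)) • c k) :
    Module.finrank ℝ (LinearMap.range T) =
      Module.finrank ℝ
        (Submodule.span ℝ {x : Fin n → ℝ | ∃ k ∈ S, x = fun i => ((k i : ℝ))}) := by
  classical
  -- the dot-product bilinear form on `Fin n → ℝ`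
  set B : LinearMap.BilinForm ℝ (Fin n → ℝ) :=
    LinearMap.mk₂ ℝ (fun x y => ∑ i, x i * y i)
      (fun x x' y => by simp [add_mul, Finset.sum_add_distrib])
      (fun a x y => by simp [Finset.mul_sum, mul_assoc])
      (fun x y y' => by simp [mul_add, Finset.sum_add_distrib])
      (fun a x y => by
        simp [Finset.mul_sum]; exact Finset.sum_congr rfl fun i _ => by ring) with hB
  have hBapp : ∀ x y : Fin n → ℝ, B x y = ∑ i, x i * y i := fun x y => rfl
  have hsymm : ∀ x y : Fin n → ℝ, B x y = B y x := fun x y => by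
    simp only [hBapp]; exact Finset.sum_congr rfl fun i _ => mul_comm _ _
  have hrefl : B.IsRefl := fun x y h => by rw [hsymm]; exact h
  have hnd : B.Nondegenerate := by
    refine (LinearMap.IsRefl.nondegenerate_iff_separatingLeft hrefl).mpr ?_
    intro x hx
    funext i
    have := hx (Pi.single i 1)
    simp only [hBapp] at this
    rw [Finset.sum_eq_single i] at this
    · simpa using this
    · intro j _ hj; simp [Pi.single_eq_of_ne hj]
    · simp
  set s : Set (Fin n → ℝ) := {x : Fin n → ℝ | ∃ k ∈ S, x = fun i => ((k i : ℝ))} with hs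
  set V : Submodule ℝ (Fin n → ℝ) := Submodule.span ℝ s with hV
  -- kernel of T equals the B-orthogonal of V
  have hker : LinearMap.ker T = B.orthogonal V := by
    ext α
    simp only [LinearMap.mem_ker, LinearMap.BilinForm.mem_orthogonal_iff]
    constructor
    · intro h v hv
      have key : ∀ v ∈ s, B.IsOrtho v α := by
        rintro v ⟨k, hk, rfl⟩
        have h1 : T α ⟨k, hk⟩ = 0 := by rw [h]; rfl
        rw [hT] at h1
        rcases smul_eq_zero.mp h1 with h2 | h2
        · show B _ α = 0
          rw [hsymm, hBapp]; exact h2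
        · exact absurd h2 (hc k hk)
      -- extend from generators to span
      refine Submodule.span_induction (fun v hv => key v hv) ?_ ?_ ?_ hv
      · show B 0 α = 0; simp
      · intro x y _ _ hx hy
        show B (x + y) α = 0
        rw [map_add]; simp only [LinearMap.add_apply]
        rw [hx, hy, add_zero]
      · intro a x _ hx
        show B (a • x) α = 0
        rw [map_smul]; simp only [LinearMap.smul_apply]
        rw [hx, smul_zero]
    · intro h
      funext k
      rw [hT]
      have hv : (fun i => ((k : Fin n → ℤ) i : ℝ)) ∈ V :=
        Submodule.subset_span ⟨k, k.2, rfl⟩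
      have := h _ hv
      have h2 : (∑ i, α i * ((k : Fin n → ℤ) i : ℝ)) = 0 := by
        rw [show (∑ i, α i * ((k : Fin n → ℤ) i : ℝ)) = B α (fun i => ((k : Fin n → ℤ) i : ℝ))
          from rfl, hsymm]
        exact this
      simp [h2]
  have h1 : finrank ℝ (LinearMap.range T) + finrank ℝ (LinearMap.ker T) = n := by
    rw [LinearMap.finrank_range_add_finrank_ker]
    simp
  have h2 : finrank ℝ (B.orthogonal V) = n - finrank ℝ V := by
    rw [LinearMap.BilinForm.finrank_orthogonal hnd]
    simp
  have h3 : finrank ℝ V ≤ n := by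
    have := Submodule.finrank_le V
    simpa using this
  rw [hker, h2] at h1
  omega
end
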